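/- Let $a_1, a_2 \in \mathbb{S}^{d-1}$ and $\alpha, \beta \in [0, \sqrt{d}]$. Define half-spaces $H_{a,\gamma} = \{x \in [0,1]^d : \langle x, a\rangle \ge \gamma\}$. Then there exists a constant $C$ depending only on $d$ such that $|H_{a_1,\alpha} \triangle H_{a_2,\beta}| \le C(\sphericalangle(a_1, a_2) + |\alpha - \beta|)$, where $\sphericalangle(a_1,a_2) = \arccos(\langle a_1, a_2\rangle)$ is the spherical angle. -/

import Mathlib

open MeasureTheory

lemma interval_bound (m b δ : ℝ) (hm : m ≠ 0) (hδ : 0 ≤ δ) :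
    volume {t : ℝ | b ≤ t * m ∧ t * m ≤ b + δ} ≤ ENNReal.ofReal (δ / |m|) := by
  rcases hm.lt_or_gt with h | h
  · have hs : {t : ℝ | b ≤ t * m ∧ t * m ≤ b + δ} = Set.Icc ((b + δ) / m) (b / m) := by
      ext t
      simp only [Set.mem_setOf_eq, Set.mem_Icc, div_le_iff_of_neg h, le_div_iff_of_neg h]
      tauto
    rw [hs, Real.volume_Icc]
    apply ENNReal.ofReal_le_ofReal
    rw [abs_of_neg h, div_sub_div_same]
    ring_nf
    exact le_rfl
  · have hs : {t : ℝ | b ≤ t * m ∧ t * m ≤ b + δ} = Set.Icc (b / m) ((b + δ) / m) := by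
      ext t
      simp only [Set.mem_setOf_eq, Set.mem_Icc, div_le_iff₀ h, le_div_iff₀ h]
    rw [hs, Real.volume_Icc]
    apply ENNReal.ofReal_le_ofReal
    rw [abs_of_pos h, div_sub_div_same]
    ring_nf
    exact le_rfl

lemma slab_bound (n : ℕ) (a : Fin (n + 1) → ℝ) (ha : ∑ i, a i ^ 2 = 1) (γ δ : ℝ)
    (hδ : 0 ≤ δ) :
    volume {x : Fin (n + 1) → ℝ | (∀ i, x i ∈ Set.Icc (0:ℝ) 1) ∧
        γ ≤ ∑ i, x i * a i ∧ ∑ i, x i * a i ≤ γ + δ} ≤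
      ENNReal.ofReal (Real.sqrt (n + 1) * δ) := by
  have hn1 : (0:ℝ) < (n + 1 : ℝ) := by positivity
  obtain ⟨i₀, hi₀⟩ : ∃ i₀ : Fin (n + 1), 1 / (n + 1 : ℝ) ≤ a i₀ ^ 2 := by
    by_contra hcon
    push_neg at hcon
    have : (1:ℝ) < 1 := by
      calc (1:ℝ) = ∑ i, a i ^ 2 := ha.symm
        _ < ∑ _i : Fin (n + 1), (1 / (n + 1 : ℝ)) :=
            Finset.sum_lt_sum_of_nonempty Finset.univ_nonempty fun i _ => hcon i
        _ = 1 := by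
            rw [Finset.sum_const, Finset.card_univ, Fintype.card_fin, nsmul_eq_mul]
            push_cast
            field_simp
    exact lt_irrefl _ this
  set m := a i₀ with hm_def
  have hm2 : 0 < m ^ 2 := lt_of_lt_of_le (by positivity) hi₀
  have hm : m ≠ 0 := fun h => by simp [h] at hm2
  have habs : 1 / Real.sqrt (n + 1) ≤ |m| := by
    have h1 := Real.sqrt_le_sqrt hi₀
    rw [Real.sqrt_sq_eq_abs] at h1
    rw [one_div, Real.sqrt_inv, ← one_div] at h1
    exact h1
  have hdiv : δ / |m| ≤ Real.sqrt (n + 1) * δ := by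
    have habs0 : (0:ℝ) < |m| := abs_pos.mpr hm
    have hsq : (0:ℝ) < Real.sqrt (n + 1) := Real.sqrt_pos.mpr hn1
    have h2 : 1 / |m| ≤ Real.sqrt (n + 1) := (one_div_le habs0 hsq).mpr habs
    calc δ / |m| = δ * (1 / |m|) := by ring
      _ ≤ δ * Real.sqrt (n + 1) := mul_le_mul_of_nonneg_left h2 hδ
      _ = Real.sqrt (n + 1) * δ := by ring
  -- measurability of the slab
  set S : Set (Fin (n + 1) → ℝ) := {x | (∀ i, x i ∈ Set.Icc (0:ℝ) 1) ∧
      γ ≤ ∑ i, x i * a i ∧ ∑ i, x i * a i ≤ γ + δ} with hS_def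
  have hsum_meas : Measurable fun x : Fin (n + 1) → ℝ => ∑ i, x i * a i :=
    Finset.measurable_sum _ fun i _ => (measurable_pi_apply i).mul_const _
  have hS : MeasurableSet S := by
    have h1 : MeasurableSet {x : Fin (n + 1) → ℝ | ∀ i, x i ∈ Set.Icc (0:ℝ) 1} := by
      have : {x : Fin (n + 1) → ℝ | ∀ i, x i ∈ Set.Icc (0:ℝ) 1} =
          Set.pi Set.univ fun _ => Set.Icc (0:ℝ) 1 := by
        ext x; simp [Set.mem_pi, Pi.le_def, forall_and]
      rw [this]
      exact MeasurableSet.univ_pi fun _ => measurableSet_Icc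
    have h2 : MeasurableSet {x : Fin (n + 1) → ℝ | γ ≤ ∑ i, x i * a i ∧ ∑ i, x i * a i ≤ γ + δ} := by
      have : {x : Fin (n + 1) → ℝ | γ ≤ ∑ i, x i * a i ∧ ∑ i, x i * a i ≤ γ + δ} =
          (fun x : Fin (n + 1) → ℝ => ∑ i, x i * a i) ⁻¹' Set.Icc γ (γ + δ) := by
        ext x; simp [Set.mem_Icc]
      rw [this]
      exact hsum_meas measurableSet_Icc
    have : S = _ ∩ _ := rfl
    exact h1.inter h2
  -- transfer to a product space, splitting off coordinate i₀
  set e := MeasurableEquiv.piFinSuccAbove (fun _ : Fin (n + 1) => ℝ) i₀ with he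
  have mp := measurePreserving_piFinSuccAbove (fun _ : Fin (n + 1) => (volume : Measure ℝ)) i₀
  set T : Set (ℝ × (Fin n → ℝ)) := e.symm ⁻¹' S with hT
  have hT_meas : MeasurableSet T := e.symm.measurable hS
  have hpre : e ⁻¹' T = S := by
    ext x
    simp [hT]
  have hvol : volume S =
      ((volume : Measure ℝ).prod (Measure.pi fun _ : Fin n => (volume : Measure ℝ))) T := by
    have h1 := mp.measure_preimage hT_meas.nullMeasurableSet
    rw [hpre] at h1
    rw [volume_pi]
    exact h1
  -- sections
  have hsection : ∀ y : Fin n → ℝ,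
      volume ((fun t => (t, y)) ⁻¹' T) ≤
        Set.indicator (Set.pi Set.univ fun _ : Fin n => Set.Icc (0:ℝ) 1)
          (fun _ => ENNReal.ofReal (δ / |m|)) y := by
    intro y
    by_cases hy : y ∈ Set.pi Set.univ fun _ : Fin n => Set.Icc (0:ℝ) 1
    · rw [Set.indicator_of_mem hy]
      refine le_trans (measure_mono ?_) (interval_bound m (γ - ∑ j : Fin n, y j * a (i₀.succAbove j)) δ hm hδ)
      intro t ht
      simp only [Set.mem_preimage, hT] at ht
      set x : Fin (n + 1) → ℝ := Fin.insertNth (α := fun _ => ℝ) i₀ t y with hxdef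
      have hx : e.symm (t, y) = x := rfl
      rw [hx] at ht
      obtain ⟨-, h2, h3⟩ := ht
      have hsum : ∑ i, x i * a i =
          t * m + ∑ j : Fin n, y j * a (i₀.succAbove j) := by
        rw [Fin.sum_univ_succAbove (fun i => x i * a i) i₀]
        simp [hxdef, Fin.insertNth_apply_same, Fin.insertNth_apply_succAbove]
        exact Or.inl rfl
      rw [hsum] at h2 h3
      constructor <;> [linarith; linarith]
    · rw [Set.indicator_of_notMem hy]
      have : (fun t => (t, y)) ⁻¹' T = (∅ : Set ℝ) := by
        ext t
        simp only [Set.mem_preimage, hT, Set.mem_empty_iff_false, iff_false]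
        intro ht
        have hx : e.symm (t, y) = Fin.insertNth (α := fun _ => ℝ) i₀ t y := rfl
        rw [hx] at ht
        obtain ⟨h1, -, -⟩ := ht
        apply hy
        intro j _
        have := h1 (i₀.succAbove j)
        rwa [Fin.insertNth_apply_succAbove] at this
      rw [this]
      simp
  calc volume S
      = ((volume : Measure ℝ).prod (Measure.pi fun _ : Fin n => (volume : Measure ℝ))) T := hvol
    _ = ∫⁻ y, volume ((fun t => (t, y)) ⁻¹' T) ∂(Measure.pi fun _ : Fin n => (volume : Measure ℝ)) :=
        Measure.prod_apply_symm hT_meas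
    _ ≤ ∫⁻ y, Set.indicator (Set.pi Set.univ fun _ : Fin n => Set.Icc (0:ℝ) 1)
          (fun _ => ENNReal.ofReal (δ / |m|)) y ∂(Measure.pi fun _ : Fin n => (volume : Measure ℝ)) :=
        lintegral_mono hsection
    _ = ENNReal.ofReal (δ / |m|) *
          (Measure.pi fun _ : Fin n => (volume : Measure ℝ)) (Set.pi Set.univ fun _ : Fin n => Set.Icc (0:ℝ) 1) := by
        rw [lintegral_indicator (MeasurableSet.univ_pi fun _ => measurableSet_Icc)]
        simp [Measure.restrict_apply]
    _ = ENNReal.ofReal (δ / |m|) := by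
        rw [Measure.pi_pi]
        simp [Real.volume_Icc]
    _ ≤ ENNReal.ofReal (Real.sqrt (n + 1) * δ) := ENNReal.ofReal_le_ofReal hdiv

/-- The half-space `H_{a,γ} = {x ∈ [0,1]^d : ⟨x,a⟩ ≥ γ}`. -/
def halfSpace {d : ℕ} (a : Fin d → ℝ) (γ : ℝ) : Set (Fin d → ℝ) :=
  {x | (∀ i, x i ∈ Set.Icc (0:ℝ) 1) ∧ γ ≤ ∑ i, x i * a i}

/-- The symmetric difference of two half-spaces is controlled by the
spherical angle between the normals plus the difference of the offsets:
`|H_{a₁,α} △ H_{a₂,β}| ≤ C (∢(a₁,a₂) + |α - β|)`. -/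
theorem halfspace_symmDiff_bound (d : ℕ) (hd : 1 ≤ d) :
    ∃ C : ℝ, 0 < C ∧
      ∀ (a₁ a₂ : Fin d → ℝ) (α β : ℝ),
        (∑ i, (a₁ i) ^ 2 = 1) → (∑ i, (a₂ i) ^ 2 = 1) →
        α ∈ Set.Icc (0:ℝ) (Real.sqrt d) → β ∈ Set.Icc (0:ℝ) (Real.sqrt d) →
        (volume (symmDiff (halfSpace a₁ α) (halfSpace a₂ β))).toReal ≤
          C * (Real.arccos (∑ i, a₁ i * a₂ i) + |α - β|) := by
  obtain ⟨n, rfl⟩ : ∃ n, d = n + 1 := ⟨d - 1, (Nat.succ_pred_eq_of_pos hd).symm⟩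
  refine ⟨2 * (n + 1) + Real.sqrt ((n : ℝ) + 1), by positivity, ?_⟩
  intro a₁ a₂ α β ha₁ ha₂ hα hβ
  set s := Real.sqrt ((n : ℝ) + 1) with hs_def
  have hs0 : 0 ≤ s := Real.sqrt_nonneg _
  set θ := Real.arccos (∑ i, a₁ i * a₂ i) with hθ_def
  have hθ0 : 0 ≤ θ := Real.arccos_nonneg _
  set r := Real.sqrt (∑ i, (a₁ i - a₂ i) ^ 2) with hr_def
  have hr0 : 0 ≤ r := Real.sqrt_nonneg _
  -- r ≤ θ
  have ht_le : |∑ i, a₁ i * a₂ i| ≤ 1 := by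
    have h := Finset.sum_mul_sq_le_sq_mul_sq Finset.univ a₁ a₂
    rw [ha₁, ha₂, mul_one] at h
    rw [abs_le]
    constructor <;> nlinarith [h]
  have hrθ : r ≤ θ := by
    obtain ⟨htl, htr⟩ := abs_le.mp ht_le
    have hcos : Real.cos θ = ∑ i, a₁ i * a₂ i := Real.cos_arccos htl htr
    have hexp : ∑ i, (a₁ i - a₂ i) ^ 2 = 2 - 2 * ∑ i, a₁ i * a₂ i := by
      have h1 : ∀ i ∈ Finset.univ, (a₁ i - a₂ i) ^ 2 =
          a₁ i ^ 2 + a₂ i ^ 2 - 2 * (a₁ i * a₂ i) := fun i _ => by ring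
      rw [Finset.sum_congr rfl h1, Finset.sum_sub_distrib, Finset.sum_add_distrib,
        ha₁, ha₂, ← Finset.mul_sum]
      ring
    have hb := Real.one_sub_sq_div_two_le_cos (x := θ)
    have h2 : ∑ i, (a₁ i - a₂ i) ^ 2 ≤ θ ^ 2 := by
      rw [hexp, ← hcos]; linarith
    calc r ≤ Real.sqrt (θ ^ 2) := Real.sqrt_le_sqrt h2
      _ = θ := Real.sqrt_sq hθ0
  -- Cauchy-Schwarz on the cube
  have hCS : ∀ x : Fin (n + 1) → ℝ, (∀ i, x i ∈ Set.Icc (0:ℝ) 1) →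
      |∑ i, x i * a₁ i - ∑ i, x i * a₂ i| ≤ s * r := by
    intro x hx
    have h1 : ∑ i, x i * a₁ i - ∑ i, x i * a₂ i = ∑ i, x i * (a₁ i - a₂ i) := by
      rw [← Finset.sum_sub_distrib]
      exact Finset.sum_congr rfl fun i _ => by ring
    have h2 : (∑ i, x i * (a₁ i - a₂ i)) ^ 2 ≤
        (∑ i, x i ^ 2) * ∑ i, (a₁ i - a₂ i) ^ 2 :=
      Finset.sum_mul_sq_le_sq_mul_sq _ _ _
    have h3 : ∑ i, x i ^ 2 ≤ ((n : ℝ) + 1) := by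
      calc ∑ i, x i ^ 2 ≤ ∑ _i : Fin (n + 1), (1 : ℝ) := by
            refine Finset.sum_le_sum fun i _ => ?_
            obtain ⟨h0, h1'⟩ := hx i
            nlinarith
        _ = ((n : ℝ) + 1) := by simp
    have hr2 : ∑ i, (a₁ i - a₂ i) ^ 2 = r ^ 2 := by
      rw [hr_def, Real.sq_sqrt]
      positivity
    have h4 : (∑ i, x i * (a₁ i - a₂ i)) ^ 2 ≤ ((n : ℝ) + 1) * r ^ 2 := by
      rw [hr2] at h2
      nlinarith [sq_nonneg r]
    rw [h1]
    calc |∑ i, x i * (a₁ i - a₂ i)| = Real.sqrt ((∑ i, x i * (a₁ i - a₂ i)) ^ 2) :=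
          (Real.sqrt_sq_eq_abs _).symm
      _ ≤ Real.sqrt (((n : ℝ) + 1) * r ^ 2) := Real.sqrt_le_sqrt h4
      _ = s * r := by
          rw [Real.sqrt_mul (by positivity), Real.sqrt_sq hr0]
  -- the three slab bounds
  have hb1 := slab_bound n a₁ ha₁ (min α β) |α - β| (abs_nonneg _)
  have hb2 := slab_bound n a₁ ha₁ β (s * r) (mul_nonneg hs0 hr0)
  have hb3 := slab_bound n a₂ ha₂ β (s * r) (mul_nonneg hs0 hr0)
  -- inclusion 1
  have incl1 : symmDiff (halfSpace a₁ α) (halfSpace a₁ β) ⊆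
      {x : Fin (n + 1) → ℝ | (∀ i, x i ∈ Set.Icc (0:ℝ) 1) ∧
        min α β ≤ ∑ i, x i * a₁ i ∧ ∑ i, x i * a₁ i ≤ min α β + |α - β|} := by
    intro x hx
    rw [Set.mem_symmDiff] at hx
    have hmaxmin : min α β + |α - β| = max α β := by
      rcases le_total α β with h | h
      · rw [min_eq_left h, max_eq_right h, abs_of_nonpos (by linarith)]; ring
      · rw [min_eq_right h, max_eq_left h, abs_of_nonneg (by linarith)]; ring
    rcases hx with ⟨⟨hc, h1⟩, h2⟩ | ⟨⟨hc, h1⟩, h2⟩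
    · have h3 : ∑ i, x i * a₁ i < β := by
        by_contra h4
        exact h2 ⟨hc, le_of_not_gt h4⟩
      refine ⟨hc, le_trans (min_le_left _ _) h1, ?_⟩
      rw [hmaxmin]
      exact le_trans h3.le (le_max_right _ _)
    · have h3 : ∑ i, x i * a₁ i < α := by
        by_contra h4
        exact h2 ⟨hc, le_of_not_gt h4⟩
      refine ⟨hc, le_trans (min_le_right _ _) h1, ?_⟩
      rw [hmaxmin]
      exact le_trans h3.le (le_max_left _ _)
  -- inclusion 2
  have incl2 : symmDiff (halfSpace a₁ β) (halfSpace a₂ β) ⊆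
      {x : Fin (n + 1) → ℝ | (∀ i, x i ∈ Set.Icc (0:ℝ) 1) ∧
        β ≤ ∑ i, x i * a₁ i ∧ ∑ i, x i * a₁ i ≤ β + s * r} ∪
      {x : Fin (n + 1) → ℝ | (∀ i, x i ∈ Set.Icc (0:ℝ) 1) ∧
        β ≤ ∑ i, x i * a₂ i ∧ ∑ i, x i * a₂ i ≤ β + s * r} := by
    intro x hx
    rw [Set.mem_symmDiff] at hx
    rcases hx with ⟨⟨hc, h1⟩, h2⟩ | ⟨⟨hc, h1⟩, h2⟩
    · left
      have h3 : ∑ i, x i * a₂ i < β := by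
        by_contra h4
        exact h2 ⟨hc, le_of_not_gt h4⟩
      have h5 := hCS x hc
      have h6 := le_abs_self (∑ i, x i * a₁ i - ∑ i, x i * a₂ i)
      exact ⟨hc, h1, by linarith [abs_le.mp h5]⟩
    · right
      have h3 : ∑ i, x i * a₁ i < β := by
        by_contra h4
        exact h2 ⟨hc, le_of_not_gt h4⟩
      have h5 := hCS x hc
      exact ⟨hc, h1, by linarith [abs_le.mp h5]⟩
  -- assemble
  have htri : symmDiff (halfSpace a₁ α) (halfSpace a₂ β) ⊆
      symmDiff (halfSpace a₁ α) (halfSpace a₁ β) ∪ symmDiff (halfSpace a₁ β) (halfSpace a₂ β) :=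
    symmDiff_triangle _ _ _
  have hv : volume (symmDiff (halfSpace a₁ α) (halfSpace a₂ β)) ≤
      ENNReal.ofReal (s * |α - β|) + (ENNReal.ofReal (s * (s * r)) + ENNReal.ofReal (s * (s * r))) := by
    calc volume (symmDiff (halfSpace a₁ α) (halfSpace a₂ β))
        ≤ volume (symmDiff (halfSpace a₁ α) (halfSpace a₁ β) ∪
            symmDiff (halfSpace a₁ β) (halfSpace a₂ β)) := measure_mono htri
      _ ≤ volume (symmDiff (halfSpace a₁ α) (halfSpace a₁ β)) +
            volume (symmDiff (halfSpace a₁ β) (halfSpace a₂ β)) := measure_union_le _ _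
      _ ≤ ENNReal.ofReal (s * |α - β|) +
            (ENNReal.ofReal (s * (s * r)) + ENNReal.ofReal (s * (s * r))) := by
          refine add_le_add (le_trans (measure_mono incl1) hb1) ?_
          refine le_trans (measure_mono incl2) ?_
          refine le_trans (measure_union_le _ _) ?_
          exact add_le_add (le_trans (measure_mono Set.Subset.rfl) hb2) hb3
  have hC0 : (0:ℝ) ≤ (2 * (n + 1) + s) * (θ + |α - β|) := by
    have := abs_nonneg (α - β)
    positivity
  refine ENNReal.toReal_le_of_le_ofReal hC0 ?_
  refine le_trans hv ?_
  rw [← ENNReal.ofReal_add (by positivity) (by positivity),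
    ← ENNReal.ofReal_add (by positivity) (by positivity)]
  apply ENNReal.ofReal_le_ofReal
  have hss : s * s = (n : ℝ) + 1 := Real.mul_self_sqrt (by positivity)
  have hab : (0:ℝ) ≤ |α - β| := abs_nonneg _
  nlinarith [mul_nonneg hs0 hab, mul_le_mul_of_nonneg_left hrθ (mul_nonneg hs0 hs0)]
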